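/- Let H = {0.1, 0.2, 0.3, 0.5, 0.7, 0.8, 0.9} ⊂ (0,1]. Then: (a) for every k ∈ {1, …, 7}, exactly one element of H lies in the bin ((k−1)/7, k/7]; and (b) there is no partition of H into sets G_1, G_2, G_3 with |G_1| = 1, |G_2| = |G_3| = 3 such that G_1 has exactly one element in (0,1] and, for each j ∈ {2,3} and each k ∈ {1,2,3}, G_j has exactly one element in the bin ((k−1)/3, k/3]. -/

import Mathlib

lemma mid_mem (G H : Finset ℚ) (hsub : G ⊆ H)
    (hH : H = {1/10, 2/10, 3/10, 5/10, 7/10, 8/10, 9/10})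
    (h : (G.filter (fun x => ((2 : ℚ) - 1) / 3 < x ∧ x ≤ (2 : ℚ) / 3)).card = 1) :
    (5 : ℚ)/10 ∈ G := by
  obtain ⟨x, hx⟩ := Finset.card_eq_one.mp h
  have hxmem : x ∈ G.filter (fun x => ((2 : ℚ) - 1) / 3 < x ∧ x ≤ (2 : ℚ) / 3) := by
    simp [hx]
  rw [Finset.mem_filter] at hxmem
  obtain ⟨hxG, hx1, hx2⟩ := hxmem
  have hxH : x ∈ H := hsub hxG
  rw [hH] at hxH
  simp only [Finset.mem_insert, Finset.mem_singleton] at hxH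
  have : x = 5/10 := by rcases hxH with h|h|h|h|h|h|h <;> subst h <;> revert hx1 hx2 <;> norm_num
  rwa [← this]

/-- Counterexample from the remark after Theorem 1: the 7-point Latin hypercube design
`H = {0.1, 0.2, 0.3, 0.5, 0.7, 0.8, 0.9}` has exactly one point in each bin
`((k-1)/7, k/7]`, but it admits no partition into slices `G₁, G₂, G₃` of sizes
`1, 3, 3` each of which is a Latin hypercube design. -/
theorem stmt_11 :
    ∀ H : Finset ℚ,
      H = {1/10, 2/10, 3/10, 5/10, 7/10, 8/10, 9/10} →
      ((∀ k ∈ Finset.Icc (1 : ℕ) 7,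
        (H.filter (fun x => ((k : ℚ) - 1) / 7 < x ∧ x ≤ (k : ℚ) / 7)).card = 1) ∧
      ¬ ∃ G₁ G₂ G₃ : Finset ℚ,
          Disjoint G₁ G₂ ∧ Disjoint G₁ G₃ ∧ Disjoint G₂ G₃ ∧
          G₁ ∪ G₂ ∪ G₃ = H ∧
          G₁.card = 1 ∧ G₂.card = 3 ∧ G₃.card = 3 ∧
          (G₁.filter (fun x => 0 < x ∧ x ≤ 1)).card = 1 ∧
          (∀ k ∈ Finset.Icc (1 : ℕ) 3,
            (G₂.filter (fun x => ((k : ℚ) - 1) / 3 < x ∧ x ≤ (k : ℚ) / 3)).card = 1) ∧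
          (∀ k ∈ Finset.Icc (1 : ℕ) 3,
            (G₃.filter (fun x => ((k : ℚ) - 1) / 3 < x ∧ x ≤ (k : ℚ) / 3)).card = 1)) := by
  intro H hH
  constructor
  · intro k hk
    subst hH
    fin_cases hk <;> norm_num [Finset.filter_insert, Finset.filter_singleton]
  · rintro ⟨G₁, G₂, G₃, h12, h13, h23, hUnion, hc1, hc2, hc3, hb1, hb2, hb3⟩
    have hsub2 : G₂ ⊆ H := by
      rw [← hUnion]; intro x hx
      simp [Finset.mem_union, hx]
    have hsub3 : G₃ ⊆ H := by
      rw [← hUnion]; intro x hx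
      simp [Finset.mem_union, hx]
    have h2 : (5 : ℚ)/10 ∈ G₂ := mid_mem G₂ H hsub2 hH (hb2 2 (by decide))
    have h3 : (5 : ℚ)/10 ∈ G₃ := mid_mem G₃ H hsub3 hH (hb3 2 (by decide))
    exact Finset.disjoint_left.mp h23 h2 h3
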